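/- Let X be a compact metric space, G a non-empty closed relation on X, and α an open cover of X. Then the limit lim_{m→∞} (log N(⋆_{i=1}^{m} G^{-1}, α^{m+1}))/m exists (in the reals). -/

import Mathlib

open Filter Topology

/-- Minimal number of members of `U` needed to cover `K`. -/
noncomputable def covN {Z : Type*} (K : Set Z) (U : Set (Set Z)) : ℕ :=
  sInf {n | ∃ V : Finset (Set Z), ↑V ⊆ U ∧ V.card = n ∧ K ⊆ ⋃ S ∈ V, S}

/-- The family of `n`-boxes generated by the family `α`. -/
def boxes {X : Type*} (α : Set (Set X)) (n : ℕ) : Set (Set (Fin n → X)) :=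
  {S | ∃ A : Fin n → Set X, (∀ i, A i ∈ α) ∧ S = {x | ∀ i, x i ∈ A i}}

/-- The `m`-th Mahavier product `⋆_{i=1}^m G⁻¹`. -/
def mah {X : Type*} (G : Set (X × X)) (m : ℕ) : Set (Fin (m + 1) → X) :=
  {x | ∀ i : Fin m, (x i.succ, x i.castSucc) ∈ G}

/-- `α` is an open cover of the whole space. -/
def IsOpenCover {X : Type*} [TopologicalSpace X] (α : Set (Set X)) : Prop :=
  (∀ U ∈ α, IsOpen U) ∧ ⋃₀ α = Set.univ

/-- The entropy of `G` with respect to the open cover `α`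
(the limit of `log N(⋆_{i=1}^m G⁻¹, α^{m+1}) / m`). -/
noncomputable def entCov {X : Type*} [TopologicalSpace X] (G : Set (X × X))
    (α : Set (Set X)) : ℝ :=
  limsup (fun m : ℕ => Real.log (covN (mah G m) (boxes α (m + 1))) / m) atTop

open Classical in
/-- The entropy of a closed relation `G`. -/
noncomputable def entRel {X : Type*} [TopologicalSpace X] (G : Set (X × X)) : EReal :=
  if G = ∅ then 0
  else sSup {x : EReal | ∃ α : Set (Set X), IsOpenCover α ∧ x = (entCov G α : EReal)}


lemma mem_mah_iff {X : Type*} {G : Set (X × X)} {m : ℕ} {x : Fin (m+1) → X} :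
    x ∈ mah G m ↔ ∀ i : ℕ, (h : i < m) → (x ⟨i+1, by omega⟩, x ⟨i, by omega⟩) ∈ G := by
  constructor
  · intro hx i hi
    exact hx ⟨i, hi⟩
  · intro hx i
    exact hx i i.isLt

lemma boxes_isOpen {X : Type*} [TopologicalSpace X] {α : Set (Set X)} (hα : IsOpenCover α)
    {n : ℕ} {S : Set (Fin n → X)} (hS : S ∈ boxes α n) : IsOpen S := by
  obtain ⟨A, hA, rfl⟩ := hS
  have : {x : Fin n → X | ∀ i, x i ∈ A i} = Set.pi Set.univ A := by
    ext x; simp [Set.mem_univ_pi]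
  rw [this]
  exact isOpen_set_pi Set.finite_univ (fun i _ => hα.1 _ (hA i))

lemma boxes_cover {X : Type*} [TopologicalSpace X] {α : Set (Set X)} (hα : IsOpenCover α)
    (n : ℕ) : (Set.univ : Set (Fin n → X)) ⊆ ⋃ S ∈ boxes α n, S := by
  intro x _
  have h : ∀ p : X, ∃ U ∈ α, p ∈ U := by
    intro p
    have : p ∈ ⋃₀ α := hα.2 ▸ Set.mem_univ p
    exact this
  choose A hA hxA using fun i => h (x i)
  exact Set.mem_biUnion ⟨A, hA, rfl⟩ (fun i => hxA i)

lemma covN_set_nonempty {X : Type*} [TopologicalSpace X] [CompactSpace X]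
    {α : Set (Set X)} (hα : IsOpenCover α) (n : ℕ) (K : Set (Fin n → X)) :
    {k | ∃ V : Finset (Set (Fin n → X)), ↑V ⊆ boxes α n ∧ V.card = k ∧ K ⊆ ⋃ S ∈ V, S}.Nonempty := by
  obtain ⟨b', hb'sub, hb'fin, hb'cov⟩ :=
    CompactSpace.isCompact_univ.elim_finite_subcover_image
      (fun S hS => boxes_isOpen hα hS) (boxes_cover hα n)
  refine ⟨hb'fin.toFinset.card, hb'fin.toFinset, ?_, rfl, ?_⟩
  · simpa using hb'sub
  · intro x hx
    have := hb'cov (Set.mem_univ x)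
    simpa using this

section
variable {X : Type*} [TopologicalSpace X] [CompactSpace X] {G : Set (X × X)} {α : Set (Set X)}

/-- restriction to last n+1 coordinates, etc. `combine`. -/
def combine (m n : ℕ) (S : Set (Fin (m+1) → X)) (T : Set (Fin (n+1) → X)) :
    Set (Fin (m+n+2) → X) :=
  {x | (fun i : Fin (m+1) => x ⟨i, by omega⟩) ∈ S ∧ (fun j : Fin (n+1) => x ⟨m+1+j, by omega⟩) ∈ T}

lemma combine_mem_boxes {m n : ℕ} {S : Set (Fin (m+1) → X)} {T : Set (Fin (n+1) → X)}
    (hS : S ∈ boxes α (m+1)) (hT : T ∈ boxes α (n+1)) :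
    combine m n S T ∈ boxes α (m+n+2) := by
  obtain ⟨A, hA, rfl⟩ := hS
  obtain ⟨B, hB, rfl⟩ := hT
  refine ⟨fun i => if h : (i : ℕ) < m+1 then A ⟨i, h⟩ else B ⟨(i : ℕ) - (m+1), by omega⟩,
    fun i => ?_, ?_⟩
  · dsimp only
    split
    · exact hA _
    · exact hB _
  · ext x
    simp only [combine, Set.mem_setOf_eq]
    constructor
    · rintro ⟨h1, h2⟩ i
      split
      · rename_i h
        have := h1 ⟨i, h⟩
        simpa using this
      · rename_i h
        have := h2 ⟨(i : ℕ) - (m+1), by omega⟩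
        have he : (⟨m+1+((i : ℕ)-(m+1)), by omega⟩ : Fin (m+n+2)) = i := by
          apply Fin.ext; simp; omega
        rwa [he] at this
    · intro h
      constructor
      · intro i
        have := h ⟨i, by omega⟩
        simp only [Fin.is_lt, dif_pos] at this
        simpa using this
      · intro j
        have := h ⟨m+1+j, by omega⟩
        simp only [dif_neg (show ¬ (m+1+(j:ℕ) < m+1) by omega)] at this
        have he : (⟨m+1+(j:ℕ) - (m+1), by omega⟩ : Fin (n+1)) = j := by
          apply Fin.ext; simp
        rwa [he] at this

lemma covN_subadd (hα : IsOpenCover α) (m n : ℕ) :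
    covN (mah G (m+n+1)) (boxes α (m+n+2)) ≤
      covN (mah G m) (boxes α (m+1)) * covN (mah G n) (boxes α (n+1)) := by
  classical
  obtain ⟨V, hVsub, hVcard, hVcov⟩ := Nat.sInf_mem (covN_set_nonempty hα (m+1) (mah G m))
  obtain ⟨W, hWsub, hWcard, hWcov⟩ := Nat.sInf_mem (covN_set_nonempty hα (n+1) (mah G n))
  set F : Finset (Set (Fin (m+n+2) → X)) :=
    (V ×ˢ W).image (fun p => combine m n p.1 p.2) with hF
  have hcov : mah G (m+n+1) ⊆ ⋃ S ∈ F, S := by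
    intro x hx
    have hx' := mem_mah_iff.mp hx
    have h1 : (fun i : Fin (m+1) => x ⟨i, by omega⟩) ∈ mah G m := by
      rw [mem_mah_iff]; intro i hi; exact hx' i (by omega)
    have h2 : (fun j : Fin (n+1) => x ⟨m+1+j, by omega⟩) ∈ mah G n := by
      rw [mem_mah_iff]; intro i hi
      have := hx' (m+1+i) (by omega)
      convert this using 3 <;> simp <;> omega
    obtain ⟨S, hSV, hS⟩ : ∃ S ∈ V, (fun i : Fin (m+1) => x ⟨i, by omega⟩) ∈ S := by
      simpa using hVcov h1
    obtain ⟨T, hTW, hT⟩ : ∃ T ∈ W, (fun j : Fin (n+1) => x ⟨m+1+j, by omega⟩) ∈ T := by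
      simpa using hWcov h2
    have hc : x ∈ combine m n S T := ⟨hS, hT⟩
    have hmemF : combine m n S T ∈ F :=
      Finset.mem_image.mpr ⟨(S, T), Finset.mem_product.mpr ⟨hSV, hTW⟩, rfl⟩
    exact Set.mem_biUnion hmemF hc
  have hsub : ↑F ⊆ boxes α (m+n+2) := by
    intro S hS
    simp only [hF, Finset.coe_image, Set.mem_image, Finset.mem_coe, Finset.mem_product] at hS
    obtain ⟨⟨S', T'⟩, ⟨hS', hT'⟩, rfl⟩ := hS
    exact combine_mem_boxes (hVsub hS') (hWsub hT')
  calc covN (mah G (m+n+1)) (boxes α (m+n+2)) ≤ F.card :=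
        Nat.sInf_le ⟨F, hsub, rfl, hcov⟩
    _ ≤ (V ×ˢ W).card := by rw [hF]; exact Finset.card_image_le
    _ = V.card * W.card := Finset.card_product V W
    _ = _ := by rw [hVcard, hWcard]; rfl
end

lemma covN_empty {Z : Type*} (U : Set (Set Z)) : covN (∅ : Set Z) U = 0 := by
  apply Nat.sInf_eq_zero.mpr
  exact Or.inl ⟨∅, by simp⟩

lemma covN_pos {X : Type*} [TopologicalSpace X] [CompactSpace X]
    {α : Set (Set X)} (hα : IsOpenCover α) {n : ℕ} {K : Set (Fin n → X)}
    (hK : K.Nonempty) : 0 < covN K (boxes α n) := by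
  rcases Nat.eq_zero_or_pos (covN K (boxes α n)) with h | h
  · exfalso
    obtain ⟨V, _, hVcard, hVcov⟩ := Nat.sInf_mem (covN_set_nonempty hα n K)
    have hV0 : V = ∅ := Finset.card_eq_zero.mp (hVcard.trans h)
    subst hV0
    simp only [Finset.notMem_empty, Set.iUnion_of_empty, Set.iUnion_empty,
      Set.subset_empty_iff] at hVcov
    obtain ⟨x, hx⟩ := hK
    rw [hVcov] at hx
    exact hx
  · exact h

theorem stmt_2 {X : Type*} [MetricSpace X] [CompactSpace X]
    (G : Set (X × X)) (hGc : IsClosed G) (hGne : G.Nonempty)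
    (α : Set (Set X)) (hα : IsOpenCover α) :
    ∃ L : ℝ, Tendsto
      (fun m : ℕ => Real.log (covN (mah G m) (boxes α (m + 1))) / m) atTop (𝓝 L) := by
  by_cases hne : ∀ m, (mah G m).Nonempty
  · -- subadditive case
    set u : ℕ → ℝ := fun k => match k with
      | 0 => 0
      | k+1 => Real.log (covN (mah G k) (boxes α (k+1))) with hu
    have hupos : ∀ k, 1 ≤ covN (mah G k) (boxes α (k+1)) := fun k => covN_pos hα (hne k)
    have hunneg : ∀ k, 0 ≤ u k := by
      intro k
      match k with
      | 0 => exact le_refl 0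
      | k+1 =>
        exact Real.log_nonneg (by exact_mod_cast hupos k)
    have hsub : Subadditive u := by
      intro a b
      match a, b with
      | 0, b => simpa using le_add_of_nonneg_left (a := u b) (hunneg 0)
      | a+1, 0 => simpa using le_add_of_nonneg_right (a := u (a+1)) (hunneg 0)
      | m+1, n+1 =>
        have key := covN_subadd (G := G) hα m n
        have h1 : (1 : ℕ) ≤ covN (mah G (m+n+1)) (boxes α (m+n+2)) := hupos _
        show u (m+1+(n+1)) ≤ u (m+1) + u (n+1)
        have he : m+1+(n+1) = (m+n+1)+1 := by omega
        rw [he]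
        show Real.log (covN (mah G (m+n+1)) (boxes α (m+n+2))) ≤ _
        calc Real.log (covN (mah G (m+n+1)) (boxes α (m+n+2)))
            ≤ Real.log ((covN (mah G m) (boxes α (m+1)) : ℝ) *
                (covN (mah G n) (boxes α (n+1)))) := by
              apply Real.log_le_log (by exact_mod_cast h1)
              exact_mod_cast key
          _ = u (m+1) + u (n+1) := by
              have hm' : ((covN (mah G m) (boxes α (m+1)) : ℝ)) ≠ 0 := by
                exact_mod_cast Nat.one_le_iff_ne_zero.mp (hupos m)
              have hn' : ((covN (mah G n) (boxes α (n+1)) : ℝ)) ≠ 0 := by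
                exact_mod_cast Nat.one_le_iff_ne_zero.mp (hupos n)
              rw [Real.log_mul hm' hn']
    have hbdd : BddBelow (Set.range fun k => u k / k) := by
      refine ⟨0, ?_⟩
      rintro x ⟨k, rfl⟩
      exact div_nonneg (hunneg k) (Nat.cast_nonneg k)
    have hlim := hsub.tendsto_lim hbdd
    refine ⟨hsub.lim, ?_⟩
    have h1 : Tendsto (fun m : ℕ => u (m+1) / (m+1)) atTop (𝓝 hsub.lim) := by
      refine (hlim.comp (tendsto_add_atTop_nat 1)).congr fun m => ?_
      simp [Function.comp]
    have h2 : Tendsto (fun m : ℕ => ((m:ℝ)+1) / m) atTop (𝓝 1) := by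
      have := tendsto_one_div_atTop_nhds_zero_nat.const_add (1 : ℝ)
      rw [add_zero] at this
      apply this.congr'
      filter_upwards [eventually_ge_atTop 1] with m hm
      have : (m : ℝ) ≠ 0 := by positivity
      field_simp
    have h3 : Tendsto (fun m : ℕ => u (m+1)/(m+1) * (((m:ℝ)+1)/m)) atTop (𝓝 (hsub.lim * 1)) :=
      h1.mul h2
    rw [mul_one] at h3
    apply h3.congr'
    filter_upwards [eventually_ge_atTop 1] with m hm
    have hm0 : (m : ℝ) ≠ 0 := by positivity
    have hm1 : ((m : ℝ)+1) ≠ 0 := by positivity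
    show u (m+1)/(m+1) * (((m:ℝ)+1)/m) = Real.log (covN (mah G m) (boxes α (m+1))) / m
    rw [show u (m+1) = Real.log (covN (mah G m) (boxes α (m+1))) from rfl]
    field_simp
  · -- eventually empty case
    push_neg at hne
    obtain ⟨M, hM⟩ := hne
    refine ⟨0, ?_⟩
    apply tendsto_const_nhds.congr'
    filter_upwards [eventually_ge_atTop M] with m hm
    have hemp : mah G m = ∅ := by
      rw [Set.eq_empty_iff_forall_notMem]
      intro x hx
      have hx' := mem_mah_iff.mp hx
      have : (fun i : Fin (M+1) => x ⟨i, by omega⟩) ∈ mah G M := by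
        rw [mem_mah_iff]; intro i hi; exact hx' i (by omega)
      rw [hM] at this
      exact this
    rw [hemp, covN_empty]
    simp
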